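/- Let G, H be cutoff rules on R^K with supp(T) = supp(G) ⊕ supp(H). Then N^G = supp(H) ⊕ N^T. -/

import Mathlib

open Filter
open scoped Topology

namespace MRD

abbrev Score (K : ℕ) := Fin K → ℝ

/-- The k-th standard basis vector of `ℝ^K`. -/
def stdBasis {K : ℕ} (k : Fin K) : Score K := Pi.single k 1

/-- `T` is a cutoff rule: `T x c = g (1[x_1 > c_1], ..., 1[x_K > c_K])` for a Boolean `g`. -/
def IsCutoffRule {K : ℕ} (T : Score K → Score K → Bool) : Prop :=
  ∃ g : (Fin K → Bool) → Bool, ∀ x c, T x c = g fun k => decide (c k < x k)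

/-- Support directions `S(T)`. -/
def suppDirs {K : ℕ} (T : Score K → Score K → Bool) : Set (Fin K) :=
  {k | ∃ c : Score K, ∃ l : ℝ, T 0 (c + l • stdBasis k) ≠ T 0 c}

/-- `supp(T)`: the span of the standard basis vectors in the support directions. -/
def supp {K : ℕ} (T : Score K → Score K → Bool) : Submodule ℝ (Score K) :=
  Submodule.span ℝ (stdBasis '' suppDirs T)

/-- `N^T`: scores that never affect `T`. -/
def nspace {K : ℕ} (T : Score K → Score K → Bool) : Set (Score K) :=
  {X | ∀ c, T X c = T 0 c}

/-- The component `X^T` of `X` in `supp(T)` (coordinatewise indicator projection). -/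
noncomputable def projT {K : ℕ} (T : Score K → Score K → Bool) (X : Score K) : Score K :=
  (suppDirs T).indicator X

/-- The component `X^{⊥T}` of `X` in `N^T`. -/
noncomputable def perpT {K : ℕ} (T : Score K → Score K → Bool) (X : Score K) : Score K :=
  X - projT T X

/-- Nevertaker of `T` w.r.t. decision rule `D`, for a unit with score `X`. -/
def Nevertaker {K : ℕ} (T : Score K → Score K → Bool) (D : Score K → Bool)
    (X : Score K) : Prop :=
  ∀ c ∈ supp T, D (perpT T X - c) = false

/-- Alwaystaker of `T` w.r.t. `D`. -/
def Alwaystaker {K : ℕ} (T : Score K → Score K → Bool) (D : Score K → Bool)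
    (X : Score K) : Prop :=
  ∀ c ∈ supp T, D (perpT T X - c) = true

/-- Complier of `T` w.r.t. `D`. -/
def Complier {K : ℕ} (T : Score K → Score K → Bool) (D : Score K → Bool)
    (X : Score K) : Prop :=
  ∀ c ∈ supp T, T 0 c = D (perpT T X - c)

/-- Defier of `T` w.r.t. `D`. -/
def Defier {K : ℕ} (T : Score K → Score K → Bool) (D : Score K → Bool)
    (X : Score K) : Prop :=
  ∀ c ∈ supp T, T 0 c ≠ D (perpT T X - c)

/-- Indecisive: none of the four categories. -/
def Indecisive {K : ℕ} (T : Score K → Score K → Bool) (D : Score K → Bool)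
    (X : Score K) : Prop :=
  ¬ Nevertaker T D X ∧ ¬ Alwaystaker T D X ∧ ¬ Complier T D X ∧ ¬ Defier T D X

/-- Nevertaker, cutoff-rule form: `D(X | c) = 0` for all `c ∈ supp(T)`. -/
def NevertakerC {K : ℕ} (T D : Score K → Score K → Bool) (X : Score K) : Prop :=
  ∀ c ∈ supp T, D X c = false

/-- Alwaystaker, cutoff-rule form. -/
def AlwaystakerC {K : ℕ} (T D : Score K → Score K → Bool) (X : Score K) : Prop :=
  ∀ c ∈ supp T, D X c = true

/-- Complier, cutoff-rule form: `T(X | c) = D(X | c)` for all `c ∈ supp(T)`. -/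
def ComplierC {K : ℕ} (T D : Score K → Score K → Bool) (X : Score K) : Prop :=
  ∀ c ∈ supp T, T X c = D X c

/-- Defier, cutoff-rule form. -/
def DefierC {K : ℕ} (T D : Score K → Score K → Bool) (X : Score K) : Prop :=
  ∀ c ∈ supp T, T X c ≠ D X c

lemma stdBasis_apply {K : ℕ} (k j : Fin K) :
    stdBasis k j = if j = k then 1 else 0 := Pi.single_apply k 1 j

/-- Coordinates where `g` genuinely depends. -/
def Dep {K : ℕ} (g : (Fin K → Bool) → Bool) (k : Fin K) : Prop :=
  ∃ b, g (Function.update b k true) ≠ g (Function.update b k false)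

lemma not_dep_update {K : ℕ} {g : (Fin K → Bool) → Bool} {k : Fin K}
    (h : ¬ Dep g k) (a : Fin K → Bool) (x : Bool) :
    g (Function.update a k x) = g a := by
  have h' : ∀ b, g (Function.update b k true) = g (Function.update b k false) := by
    by_contra hc
    push_neg at hc
    exact h hc
  have := h' a
  conv_rhs => rw [← Function.update_eq_self k a]
  cases x <;> cases hak : a k <;> simp_all

lemma g_eq_of_agree {K : ℕ} (g : (Fin K → Bool) → Bool) :
    ∀ (s : Finset (Fin K)) (a b : Fin K → Bool),
      (∀ k, k ∉ s → a k = b k) → (∀ k, Dep g k → a k = b k) → g a = g b := by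
  intro s
  induction s using Finset.induction_on with
  | empty =>
    intro a b h _
    congr 1
    funext k
    exact h k (Finset.notMem_empty k)
  | @insert k s hk ih =>
    intro a b h hdep
    have h1 : g a = g (Function.update a k (b k)) := by
      by_cases hab : a k = b k
      · rw [← hab, Function.update_eq_self]
      · have hnd : ¬ Dep g k := fun hd => hab (hdep k hd)
        exact (not_dep_update hnd a (b k)).symm
    rw [h1]
    apply ih
    · intro j hj
      by_cases hjk : j = k
      · subst hjk; simp
      · rw [Function.update_of_ne hjk]
        exact h j (by simp [hjk, hj])
    · intro j hj
      by_cases hjk : j = k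
      · subst hjk; simp
      · rw [Function.update_of_ne hjk]
        exact hdep j hj

lemma suppDirs_eq_dep {K : ℕ} (T : Score K → Score K → Bool)
    (g : (Fin K → Bool) → Bool) (hg : ∀ x c, T x c = g fun k => decide (c k < x k)) :
    suppDirs T = {k | Dep g k} := by
  ext k
  constructor
  · rintro ⟨c, l, hcl⟩
    rw [hg, hg] at hcl
    set b : Fin K → Bool := fun j => decide (c j < 0) with hbdef
    have hb' : (fun j => decide ((c + l • stdBasis k) j < (0:Score K) j))
        = Function.update b k (decide (c k + l < 0)) := by
      funext j
      by_cases hjk : j = k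
      · subst hjk
        simp [stdBasis_apply]
      · rw [Function.update_of_ne hjk]
        simp [stdBasis_apply, hjk, hbdef]
    rw [hb'] at hcl
    have hbb : (fun j => decide (c j < (0:Score K) j)) = b := by
      funext j; simp [hbdef]
    rw [hbb] at hcl
    refine ⟨b, ?_⟩
    have hne : decide (c k + l < 0) ≠ b k := by
      intro hEq
      apply hcl
      rw [hEq, Function.update_eq_self]
    have hx : decide (c k + l < 0) = !(b k) := by
      cases h1 : decide (c k + l < 0) <;> cases h2 : b k <;> simp_all <;> linarith
    rw [hx, show g b = g (Function.update b k (b k)) from (by rw [Function.update_eq_self])] at hcl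
    cases h2 : b k <;> rw [h2] at hcl <;>
      simp only [Bool.not_true, Bool.not_false] at hcl
    · exact hcl
    · exact fun h => hcl h.symm
  · rintro ⟨b, hb⟩
    refine ⟨fun j => if b j then -1 else 1, if b k then 2 else -2, ?_⟩
    rw [hg, hg]
    have h0 : (fun j => decide ((fun j => if b j then (-1:ℝ) else 1) j < (0:Score K) j)) = b := by
      funext j; cases hbj : b j <;> simp [hbj] <;> norm_num
    rw [h0]
    have h1 : (fun j => decide (((fun j => if b j then (-1:ℝ) else 1) + (if b k then (2:ℝ) else -2) • stdBasis k) j < (0:Score K) j)) = Function.update b k (!b k) := by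
      funext j
      by_cases hjk : j = k
      · subst hjk
        cases hbj : b j <;> simp [stdBasis_apply, hbj] <;> norm_num
      · rw [Function.update_of_ne hjk]
        cases hbj : b j <;> cases hbk : b k <;>
          simp [stdBasis_apply, hjk, hbj, hbk] <;> norm_num
    rw [h1, show g b = g (Function.update b k (b k)) from (by rw [Function.update_eq_self])]
    cases h2 : b k <;>
      simp only [Bool.not_true, Bool.not_false]
    · exact hb
    · exact fun h => hb h.symm


lemma nspace_eq {K : ℕ} (T : Score K → Score K → Bool)
    (g : (Fin K → Bool) → Bool) (hg : ∀ x c, T x c = g fun k => decide (c k < x k)) :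
    nspace T = {X : Score K | ∀ k ∈ suppDirs T, X k = 0} := by
  have hsd := suppDirs_eq_dep T g hg
  ext X
  constructor
  · intro hX k hk
    rw [hsd] at hk
    obtain ⟨b, hb⟩ := hk
    by_contra hXk
    set c : Score K := fun j => if j = k then (if 0 < X k then 0 else X k)
      else (if b j then min (X j) 0 - 1 else max (X j) 0 + 1) with hc
    have hthis := hX c
    rw [hg, hg] at hthis
    have hA : (fun j => decide (c j < X j)) = Function.update b k (decide (0 < X k)) := by
      funext j
      by_cases hjk : j = k
      · subst hjk
        by_cases hpos : 0 < X j <;> simp [hc, hpos]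
      · rw [Function.update_of_ne hjk]
        cases hbj : b j
        · have h1 := le_max_left (X j) 0
          simp only [hc, if_neg hjk, hbj, Bool.false_eq_true, if_false, decide_eq_false_iff_not, not_lt]
          linarith
        · have h1 := min_le_left (X j) 0
          simp only [hc, if_neg hjk, hbj, if_true, decide_eq_true_eq]
          linarith
    have hXkneg : ¬ 0 < X k → X k < 0 := by
      intro h; rcases lt_or_eq_of_le (not_lt.mp h) with h' | h'
      · exact h'
      · exact absurd h' hXk
    have hB : (fun j => decide (c j < (0:Score K) j)) = Function.update b k (!decide (0 < X k)) := by
      funext j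
      by_cases hjk : j = k
      · subst hjk
        by_cases hpos : 0 < X j
        · simp [hc, hpos]
        · simp [hc, hpos, hXkneg hpos]
      · rw [Function.update_of_ne hjk]
        cases hbj : b j
        · have h1 := le_max_right (X j) 0
          simp only [hc, if_neg hjk, hbj, Bool.false_eq_true, if_false, Pi.zero_apply,
            decide_eq_false_iff_not, not_lt]
          linarith
        · have h1 := min_le_right (X j) 0
          simp only [hc, if_neg hjk, hbj, if_true, Pi.zero_apply, decide_eq_true_eq]
          linarith
    rw [hA, hB] at hthis
    cases hd : decide (0 < X k) <;> rw [hd] at hthis <;>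
      simp only [Bool.not_true, Bool.not_false] at hthis
    · exact hb hthis.symm
    · exact hb hthis
  · intro hX c
    rw [hg, hg]
    apply g_eq_of_agree g Finset.univ
    · intro k hk
      exact absurd (Finset.mem_univ k) hk
    · intro k hk
      have : X k = 0 := hX k (by rw [hsd]; exact hk)
      simp [this]

def vanOn {K : ℕ} (S : Set (Fin K)) : Submodule ℝ (Score K) where
  carrier := {X | ∀ k ∈ S, X k = 0}
  add_mem' := by intro a b ha hb k hk; simp [Set.mem_setOf_eq] at *; simp [ha k hk, hb k hk]
  zero_mem' := by intro k _; rfl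
  smul_mem' := by intro c a ha k hk; simp [Set.mem_setOf_eq] at *; simp [ha k hk]

lemma mem_vanOn {K : ℕ} {S : Set (Fin K)} {X : Score K} :
    X ∈ vanOn S ↔ ∀ k ∈ S, X k = 0 := Iff.rfl

lemma span_stdBasis_eq {K : ℕ} (S : Set (Fin K)) :
    Submodule.span ℝ (stdBasis '' S) = vanOn Sᶜ := by
  apply le_antisymm
  · rw [Submodule.span_le]
    rintro _ ⟨k, hk, rfl⟩ j hj
    show stdBasis k j = 0
    rw [stdBasis_apply, if_neg]
    rintro rfl; exact hj hk
  · intro X hX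
    have hrep : X = ∑ k : Fin K, X k • stdBasis k := by
      funext j
      rw [Finset.sum_apply]
      simp [stdBasis_apply]
    rw [hrep]
    apply Submodule.sum_mem
    intro k _
    by_cases hk : k ∈ S
    · exact Submodule.smul_mem _ _ (Submodule.subset_span ⟨k, hk, rfl⟩)
    · have h0 : X k = 0 := hX k hk
      rw [h0, zero_smul]; exact Submodule.zero_mem _

lemma stdBasis_mem_span_iff {K : ℕ} {S : Set (Fin K)} {k : Fin K} :
    stdBasis k ∈ Submodule.span ℝ (stdBasis '' S) ↔ k ∈ S := by
  rw [span_stdBasis_eq]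
  constructor
  · intro h
    by_contra hk
    have := h k hk
    rw [stdBasis_apply, if_pos rfl] at this
    norm_num at this
  · intro h j hj
    show stdBasis k j = 0
    rw [stdBasis_apply, if_neg]
    rintro rfl; exact hj h

/-- if `supp(T) = supp(G) ⊕ supp(H)` then `N^G = supp(H) ⊕ N^T`. -/
theorem stmt8 {K : ℕ} (T G H : Score K → Score K → Bool)
    (hT : IsCutoffRule T) (hG : IsCutoffRule G) (hH : IsCutoffRule H)
    (hdisj : Disjoint (supp G) (supp H))
    (hsum : supp T = supp G ⊔ supp H) :
    ∃ NG NT : Submodule ℝ (Score K),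
      (↑NG : Set (Score K)) = nspace G ∧ (↑NT : Set (Score K)) = nspace T ∧
      Disjoint (supp H) NT ∧ NG = supp H ⊔ NT := by
  obtain ⟨gT, hgT⟩ := hT
  obtain ⟨gG, hgG⟩ := hG
  obtain ⟨gH, hgH⟩ := hH
  have hST : suppDirs T = suppDirs G ∪ suppDirs H := by
    have h1 : supp T = Submodule.span ℝ (stdBasis '' (suppDirs G ∪ suppDirs H)) := by
      rw [hsum]
      unfold supp
      rw [Set.image_union, Submodule.span_union]
    ext k
    constructor
    · intro hk
      have h2 : stdBasis k ∈ supp T := Submodule.subset_span ⟨k, hk, rfl⟩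
      rw [h1] at h2
      exact stdBasis_mem_span_iff.mp h2
    · intro hk
      have h2 : stdBasis k ∈ Submodule.span ℝ (stdBasis '' (suppDirs G ∪ suppDirs H)) :=
        Submodule.subset_span ⟨k, hk, rfl⟩
      rw [← h1] at h2
      exact stdBasis_mem_span_iff.mp h2
  have hGH : ∀ k, k ∈ suppDirs G → k ∈ suppDirs H → False := by
    intro k h1 h2
    have hm : stdBasis k ∈ supp G ⊓ supp H :=
      ⟨Submodule.subset_span ⟨k, h1, rfl⟩, Submodule.subset_span ⟨k, h2, rfl⟩⟩
    rw [disjoint_iff.mp hdisj] at hm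
    have h0 : stdBasis k = 0 := hm
    have h3 := congrFun h0 k
    rw [stdBasis_apply, if_pos rfl] at h3
    norm_num at h3
  refine ⟨vanOn (suppDirs G), vanOn (suppDirs T), ?_, ?_, ?_, ?_⟩
  · rw [nspace_eq G gG hgG]; rfl
  · rw [nspace_eq T gT hgT]; rfl
  · rw [Submodule.disjoint_def]
    intro X hXH hXT
    rw [mem_vanOn] at hXT
    have hXH' : X ∈ vanOn (suppDirs H)ᶜ := by
      rw [← span_stdBasis_eq]; exact hXH
    rw [mem_vanOn] at hXH'
    funext k
    by_cases hk : k ∈ suppDirs H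
    · exact hXT k (by rw [hST]; exact Or.inr hk)
    · exact hXH' k hk
  · apply le_antisymm
    · intro X hX
      rw [mem_vanOn] at hX
      classical
      set Y : Score K := fun j => if j ∈ suppDirs H then X j else 0 with hYdef
      have hY : Y ∈ supp H := by
        rw [supp, span_stdBasis_eq, mem_vanOn]
        intro k hk
        simp only [hYdef, if_neg hk]
      have hZ : X - Y ∈ vanOn (suppDirs T) := by
        rw [mem_vanOn]
        intro k hk
        rw [hST] at hk
        rcases hk with hk | hk
        · have h1 : X k = 0 := hX k hk
          have h2 : k ∉ suppDirs H := fun h => hGH k hk h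
          simp [hYdef, h1, h2]
        · simp [hYdef, hk]
      have hXY : X = Y + (X - Y) := by abel
      rw [hXY]
      exact Submodule.add_mem _ (Submodule.mem_sup_left hY) (Submodule.mem_sup_right hZ)
    · apply sup_le
      · rw [supp, span_stdBasis_eq]
        intro X hX
        rw [mem_vanOn] at hX ⊢
        intro k hk
        exact hX k (fun h => hGH k hk h)
      · intro X hX
        rw [mem_vanOn] at hX ⊢
        intro k hk
        exact hX k (by rw [hST]; exact Or.inl hk)

end MRD
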